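/- Limit points of ADMM are KKT points: fix D ≥ 1, a consensus decomposition A_1,…,A_D : ℝ^N → ℝ^M, nonempty closed convex sets X_1,…,X_D ⊆ ℝ^N, a penalty ρ > 0, and F : (ℝ^N)^D → ℝ continuously differentiable and convex in each block (for every d and fixed other blocks, x_d ↦ F is convex). Let {(x_1^(k),…,x_D^(k), y^(k))} be sequences with x_d^(k) ∈ X_d for all d, k, satisfying the ADMM updates: for every k and every d = 1,…,D, x_d^(k+1) ∈ argmin_{x∈X_d} L_ρ(x_1^(k+1),…,x_{d−1}^(k+1), x, x_{d+1}^(k),…,x_D^(k), y^(k)), and y^(k+1) = y^(k) + ρ·Σ_{d=1}^D A_d x_d^(k+1). Assume the residual r^(k) = ‖Σ_{d=1}^D A_d x_d^(k)‖² + Σ_{d=1}^D ‖x_d^(k) − x_d^(k−1)‖² converges to 0 as k → ∞. Then every limit point (x*_1,…,x*_D, y*) of the joint sequence is a KKT point of min{ F(x_1,…,x_D) : Σ_d A_d x_d = 0, x_d ∈ X_d for all d }; in particular x*_1 = ⋯ = x*_D. -/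

import Mathlib

open Filter

/-- If a nonnegative sequence has squares tending to zero, it tends to zero. -/
lemma aux_sq_tendsto_zero {f : ℕ → ℝ} (h0 : ∀ n, 0 ≤ f n)
    (h : Filter.Tendsto (fun n => f n ^ 2) Filter.atTop (nhds 0)) :
    Filter.Tendsto f Filter.atTop (nhds 0) := by
  have h2 := (Real.continuous_sqrt.tendsto 0).comp h
  have h3 : (fun n => Real.sqrt (f n ^ 2)) = f := funext fun n => Real.sqrt_sq (h0 n)
  simpa [Function.comp_def, h3, Real.sqrt_zero] using h2

/-- Limit points of ADMM are KKT points: under a consensus decomposition and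
vanishing residual, every limit point of the joint ADMM sequence is a KKT point
of the decomposed problem; in particular all its blocks agree. -/
theorem stmt10 (D N M : ℕ) (hD : 1 ≤ D)
    (A : Fin D → (EuclideanSpace ℝ (Fin N) →ₗ[ℝ] EuclideanSpace ℝ (Fin M)))
    (hA : ∀ x : Fin D → EuclideanSpace ℝ (Fin N),
      (∑ d, A d (x d)) = 0 ↔ ∀ d d', x d = x d')
    (X : Fin D → Set (EuclideanSpace ℝ (Fin N)))
    (hXne : ∀ d, (X d).Nonempty) (hXclosed : ∀ d, IsClosed (X d))
    (hXconvex : ∀ d, Convex ℝ (X d))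
    (ρ : ℝ) (hρ : 0 < ρ)
    (F : (Fin D → EuclideanSpace ℝ (Fin N)) → ℝ) (hF : ContDiff ℝ 1 F)
    (hFconv : ∀ (d : Fin D) (z : Fin D → EuclideanSpace ℝ (Fin N)),
      ConvexOn ℝ Set.univ (fun w => F (Function.update z d w)))
    (L : (Fin D → EuclideanSpace ℝ (Fin N)) → EuclideanSpace ℝ (Fin M) → ℝ)
    (hL : ∀ x y, L x y = F x + (inner ℝ y (∑ d, A d (x d)) : ℝ)
      + ρ / 2 * ‖∑ d, A d (x d)‖ ^ 2)
    (x : ℕ → Fin D → EuclideanSpace ℝ (Fin N)) (y : ℕ → EuclideanSpace ℝ (Fin M))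
    (hxmem : ∀ k d, x k d ∈ X d)
    (hxupd : ∀ (k : ℕ) (d : Fin D), ∀ z ∈ X d,
      L (fun d' => if d' < d then x (k + 1) d' else if d' = d then x (k + 1) d else x k d') (y k)
        ≤ L (fun d' => if d' < d then x (k + 1) d' else if d' = d then z else x k d') (y k))
    (hyupd : ∀ k, y (k + 1) = y k + ρ • ∑ d, A d (x (k + 1) d))
    (hres : Filter.Tendsto
      (fun k => ‖∑ d, A d (x (k + 1) d)‖ ^ 2 + ∑ d, ‖x (k + 1) d - x k d‖ ^ 2)
      Filter.atTop (nhds 0))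
    (xstar : Fin D → EuclideanSpace ℝ (Fin N)) (ystar : EuclideanSpace ℝ (Fin M))
    (φ : ℕ → ℕ) (hφ : StrictMono φ)
    (hlim : Filter.Tendsto (fun k => (x (φ k), y (φ k))) Filter.atTop (nhds (xstar, ystar))) :
    (∀ d, xstar d ∈ X d) ∧ (∑ d, A d (xstar d)) = 0 ∧
      (∀ d, ∀ z ∈ X d,
        F xstar + (inner ℝ ystar (A d (xstar d)) : ℝ)
          ≤ F (Function.update xstar d z) + (inner ℝ ystar (A d z) : ℝ)) ∧
      (∀ d d', xstar d = xstar d') := by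
  classical
  -- continuity facts
  have hScont : Continuous (fun v : Fin D → EuclideanSpace ℝ (Fin N) => ∑ d, A d (v d)) := by
    apply continuous_finset_sum
    intro d _
    exact (A d).continuous_of_finiteDimensional.comp (continuous_apply d)
  have hLcont : Continuous (fun p : (Fin D → EuclideanSpace ℝ (Fin N)) ×
      EuclideanSpace ℝ (Fin M) => L p.1 p.2) := by
    have heq : (fun p : (Fin D → EuclideanSpace ℝ (Fin N)) ×
        EuclideanSpace ℝ (Fin M) => L p.1 p.2)
        = fun p => F p.1 + (inner ℝ p.2 (∑ d, A d (p.1 d)) : ℝ)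
          + ρ / 2 * ‖∑ d, A d (p.1 d)‖ ^ 2 := by
      funext p; rw [hL]
    rw [heq]
    exact ((hF.continuous.comp continuous_fst).add
        (continuous_snd.inner (hScont.comp continuous_fst))).add
      (continuous_const.mul ((hScont.comp continuous_fst).norm.pow 2))
  -- componentwise limits
  have hxlim : Tendsto (fun j => x (φ j)) atTop (nhds xstar) :=
    (continuous_fst.tendsto _).comp hlim
  have hylim : Tendsto (fun j => y (φ j)) atTop (nhds ystar) :=
    (continuous_snd.tendsto _).comp hlim
  have hxd : ∀ d, Tendsto (fun j => x (φ j) d) atTop (nhds (xstar d)) :=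
    fun d => ((continuous_apply d).tendsto _).comp hxlim
  -- residual pieces tend to 0
  have hrnn : ∀ k, (0:ℝ) ≤ ∑ d, ‖x (k+1) d - x k d‖ ^ 2 :=
    fun k => Finset.sum_nonneg fun d _ => sq_nonneg _
  have hresS : Tendsto (fun k => ‖∑ d, A d (x (k+1) d)‖) atTop (nhds 0) := by
    apply aux_sq_tendsto_zero (fun k => norm_nonneg _)
    exact squeeze_zero (fun k => sq_nonneg _)
      (fun k => le_add_of_nonneg_right (hrnn k)) hres
  have hxdiff : ∀ d, Tendsto (fun k => x (k+1) d - x k d) atTop (nhds 0) := by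
    intro d
    rw [tendsto_zero_iff_norm_tendsto_zero]
    apply aux_sq_tendsto_zero (fun k => norm_nonneg _)
    apply squeeze_zero (fun k => sq_nonneg _) _ hres
    intro k
    calc ‖x (k+1) d - x k d‖ ^ 2 ≤ ∑ d', ‖x (k+1) d' - x k d'‖ ^ 2 :=
          Finset.single_le_sum (f := fun d' => ‖x (k+1) d' - x k d'‖ ^ 2)
            (fun d' _ => sq_nonneg _) (Finset.mem_univ d)
      _ ≤ _ := le_add_of_nonneg_left (sq_nonneg _)
  have hx1 : ∀ d, Tendsto (fun j => x (φ j + 1) d) atTop (nhds (xstar d)) := by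
    intro d
    have h1 := ((hxdiff d).comp hφ.tendsto_atTop).add (hxd d)
    simpa using h1
  have hx1lim : Tendsto (fun j => x (φ j + 1)) atTop (nhds xstar) :=
    tendsto_pi_nhds.mpr hx1
  -- the constraint holds at the limit
  have hSzero : (∑ d, A d (xstar d)) = 0 := by
    have h1 : Tendsto (fun j => ∑ d, A d (x (φ j + 1) d)) atTop
        (nhds (∑ d, A d (xstar d))) := (hScont.tendsto xstar).comp hx1lim
    have h2 : Tendsto (fun j => ∑ d, A d (x (φ j + 1) d)) atTop (nhds 0) := by
      rw [tendsto_zero_iff_norm_tendsto_zero]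
      exact hresS.comp hφ.tendsto_atTop
    exact tendsto_nhds_unique h1 h2
  have hmem : ∀ d, xstar d ∈ X d := fun d =>
    (hXclosed d).mem_of_tendsto (hxd d)
      (Filter.Eventually.of_forall fun j => hxmem (φ j) d)
  -- key limit inequality from the updates
  have hkey : ∀ (d : Fin D), ∀ w ∈ X d,
      L xstar ystar ≤ L (Function.update xstar d w) ystar := by
    intro d w hw
    have hv : Tendsto (fun j => (fun d' => if d' < d then x (φ j + 1) d'
        else if d' = d then x (φ j + 1) d else x (φ j) d')) atTop (nhds xstar) := by
      rw [tendsto_pi_nhds]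
      intro d'
      by_cases h1 : d' < d
      · simpa [h1] using hx1 d'
      · by_cases h2 : d' = d
        · subst h2; simpa [h1] using hx1 d'
        · simpa [h1, h2] using hxd d'
    have hw' : Tendsto (fun j => (fun d' => if d' < d then x (φ j + 1) d'
        else if d' = d then w else x (φ j) d')) atTop
        (nhds (Function.update xstar d w)) := by
      rw [tendsto_pi_nhds]
      intro d'
      by_cases h2 : d' = d
      · subst h2
        simpa [lt_irrefl, Function.update_self] using
          (tendsto_const_nhds : Tendsto (fun _ : ℕ => w) atTop (nhds w))
      · by_cases h1 : d' < d
        · simpa [h1, Function.update_of_ne h2] using hx1 d'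
        · simpa [h1, h2, Function.update_of_ne h2] using hxd d'
    have h1 := (hLcont.tendsto (xstar, ystar)).comp (hv.prodMk_nhds hylim)
    have h2 := (hLcont.tendsto (Function.update xstar d w, ystar)).comp
      (hw'.prodMk_nhds hylim)
    exact le_of_tendsto_of_tendsto' h1 h2 fun j => hxupd (φ j) d w hw
  -- sum over an updated vector
  have hSupd : ∀ (d : Fin D) (w : EuclideanSpace ℝ (Fin N)),
      (∑ d', A d' (Function.update xstar d w d')) = A d w - A d (xstar d) := by
    intro d w
    have h1 : (∑ d', A d' (Function.update xstar d w d')) - ∑ d', A d' (xstar d')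
        = A d w - A d (xstar d) := by
      rw [← Finset.sum_sub_distrib, Finset.sum_eq_single d]
      · simp
      · intro b _ hb
        simp [Function.update_of_ne hb]
      · intro h; exact absurd (Finset.mem_univ d) h
    rw [hSzero, sub_zero] at h1
    exact h1
  -- explicit form of the key inequality
  have hkey2 : ∀ (d : Fin D), ∀ w ∈ X d,
      F xstar ≤ F (Function.update xstar d w)
        + (inner ℝ ystar (A d w - A d (xstar d)) : ℝ)
        + ρ / 2 * ‖A d w - A d (xstar d)‖ ^ 2 := by
    intro d w hw
    have h := hkey d w hw
    rw [hL, hL] at h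
    rw [hSupd d w, hSzero] at h
    simpa using h
  -- the KKT variational inequality via the convexity trick
  have hpart3 : ∀ d, ∀ z ∈ X d,
      F xstar + (inner ℝ ystar (A d (xstar d)) : ℝ)
        ≤ F (Function.update xstar d z) + (inner ℝ ystar (A d z) : ℝ) := by
    intro d z hz
    set x₀ := xstar d with hx₀
    set K := ρ / 2 * ‖A d z - A d x₀‖ ^ 2 with hK
    have hstep : ∀ t : ℝ, 0 < t → t ≤ 1 →
        F xstar + (inner ℝ ystar (A d x₀) : ℝ)
          ≤ F (Function.update xstar d z) + (inner ℝ ystar (A d z) : ℝ) + t * K := by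
      intro t ht ht1
      have hwmem : (1 - t) • x₀ + t • z ∈ X d :=
        hXconvex d (hmem d) hz (by linarith) (le_of_lt ht) (by ring)
      have h1 := hkey2 d _ hwmem
      have hAw : A d ((1 - t) • x₀ + t • z) - A d x₀ = t • (A d z - A d x₀) := by
        simp only [map_add, map_smul]
        rw [smul_sub, sub_smul, one_smul]
        abel
      rw [hAw, real_inner_smul_right] at h1
      have hns : ‖t • (A d z - A d x₀)‖ ^ 2 = t ^ 2 * ‖A d z - A d x₀‖ ^ 2 := by
        rw [norm_smul, Real.norm_eq_abs, abs_of_pos ht, mul_pow]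
      rw [hns, inner_sub_right] at h1
      have hconv := (hFconv d xstar).2 (Set.mem_univ x₀) (Set.mem_univ z)
        (by linarith : (0:ℝ) ≤ 1 - t) (le_of_lt ht) (by ring)
      have hconv' : F (Function.update xstar d ((1 - t) • x₀ + t • z))
          ≤ (1 - t) * F xstar + t * F (Function.update xstar d z) := by
        simpa [hx₀, Function.update_eq_self, smul_eq_mul] using hconv
      have h4 : t * (F xstar + (inner ℝ ystar (A d x₀) : ℝ))
          ≤ t * (F (Function.update xstar d z) + (inner ℝ ystar (A d z) : ℝ) + t * K) := by
        rw [hK]; nlinarith [h1, hconv']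
      exact le_of_mul_le_mul_left h4 ht
    have hlim2 : Tendsto (fun n : ℕ => F (Function.update xstar d z)
        + (inner ℝ ystar (A d z) : ℝ) + (1 / ((n : ℝ) + 1)) * K) atTop
        (nhds (F (Function.update xstar d z) + (inner ℝ ystar (A d z) : ℝ) + 0 * K)) :=
      Filter.Tendsto.const_add _ (tendsto_one_div_add_atTop_nhds_zero_nat.mul_const K)
    rw [zero_mul, add_zero] at hlim2
    refine ge_of_tendsto' hlim2 fun n => ?_
    refine hstep (1 / ((n : ℝ) + 1)) (by positivity) ?_
    rw [div_le_one (by positivity)]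
    linarith [show (0:ℝ) ≤ (n : ℝ) from Nat.cast_nonneg n]
  exact ⟨hmem, hSzero, hpart3, (hA xstar).mp hSzero⟩
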